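/- arXiv:1009.2045 — 6 statements merged into one kernel-verified Lean document; each statement's English description precedes it below -/
import Mathlib

section
/- For every integer d ≥ 1 and every x in (0, 1/4), D_d'(x) > 0; in particular D_d is strictly increasing on (0, 1/4). -/
open Real Set

noncomputable def D (d : ℕ) (x : ℝ) : ℝ :=
  (1 - Real.cos (π * x) + Real.sin (π * x) + Real.sin (π * x) / (π * x)) ^ d
    - (Real.sin (π * x) / (π * x)) ^ d

lemma key (d : ℕ) (hd : 1 ≤ d) (x : ℝ) (hx : x ∈ Ioo (0 : ℝ) (1 / 4)) :
    ∃ y, 0 < y ∧ HasDerivAt (D d) y x := by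
  obtain ⟨hx0, hx4⟩ := hx
  have hπ := Real.pi_pos
  set t := π * x with ht
  have ht0 : 0 < t := mul_pos hπ hx0
  have htne : t ≠ 0 := ne_of_gt ht0
  have htlt : t < π / 4 := by rw [ht]; nlinarith
  have ht2 : t < π / 2 := by linarith
  have ht1 : t < 1 := by nlinarith [Real.pi_lt_d2]
  have hsin : 0 < Real.sin t := Real.sin_pos_of_pos_of_lt_pi ht0 (by linarith)
  have hcos : 0 < Real.cos t := Real.cos_pos_of_mem_Ioo ⟨by linarith, ht2⟩
  have hsinlt : Real.sin t < t := Real.sin_lt ht0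
  have hcosge : 1 - t ^ 2 / 2 ≤ Real.cos t := Real.one_sub_sq_div_two_le_cos
  have htan : t < Real.tan t := Real.lt_tan ht0 ht2
  have htcos : t * Real.cos t < Real.sin t := by
    rw [Real.tan_eq_sin_div_cos] at htan
    exact (lt_div_iff₀ hcos).mp htan
  -- derivatives
  have hlin : HasDerivAt (fun x : ℝ => π * x) π x := by
    simpa using (hasDerivAt_id x).const_mul π
  have hsinD : HasDerivAt (fun x : ℝ => Real.sin (π * x)) (Real.cos t * π) x :=
    (Real.hasDerivAt_sin t).comp x hlin
  have hcosD : HasDerivAt (fun x : ℝ => Real.cos (π * x)) (-Real.sin t * π) x :=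
    (Real.hasDerivAt_cos t).comp x hlin
  have hgD : HasDerivAt (fun x : ℝ => Real.sin (π * x) / (π * x))
      ((Real.cos t * π * t - Real.sin t * π) / t ^ 2) x := hsinD.div hlin htne
  have hfD : HasDerivAt
      (fun x : ℝ => 1 - Real.cos (π * x) + Real.sin (π * x) + Real.sin (π * x) / (π * x))
      (0 - -Real.sin t * π + Real.cos t * π + (Real.cos t * π * t - Real.sin t * π) / t ^ 2) x :=
    (((hasDerivAt_const x (1 : ℝ)).sub hcosD).add hsinD).add hgD
  set g' : ℝ := (Real.cos t * π * t - Real.sin t * π) / t ^ 2 with hg'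
  set f' : ℝ := 0 - -Real.sin t * π + Real.cos t * π + g' with hf'
  set A : ℝ := 1 - Real.cos t + Real.sin t + Real.sin t / t with hA
  set S : ℝ := Real.sin t / t with hS
  have hDD : HasDerivAt (D d) ((d : ℝ) * A ^ (d - 1) * f' - (d : ℝ) * S ^ (d - 1) * g') x := by
    have := (hfD.pow d).sub (hgD.pow d)
    have e : D d = ((fun x : ℝ => 1 - Real.cos (π * x) + Real.sin (π * x) + Real.sin (π * x) / (π * x)) ^ d
        - (fun x : ℝ => Real.sin (π * x) / (π * x)) ^ d) := by
      funext y; simp [D]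
    rw [e]; exact this
  refine ⟨_, ?_, hDD⟩
  have hSpos : 0 < S := div_pos hsin ht0
  have hApos : 0 < A := by
    have h1 : Real.cos t ≤ 1 := Real.cos_le_one t
    have : 0 < Real.sin t / t := hSpos
    rw [hA]; linarith
  have hg'neg : g' < 0 := by
    apply div_neg_of_neg_of_pos
    · nlinarith
    · positivity
  have hf'pos : 0 < f' := by
    have hlb : -(Real.sin t * π + Real.cos t * π) < g' := by
      rw [hg', lt_div_iff₀ (by positivity : (0:ℝ) < t ^ 2)]
      have h1 : t ^ 2 * (1 - t ^ 2 / 2) ≤ t ^ 2 * Real.cos t :=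
        mul_le_mul_of_nonneg_left hcosge (sq_nonneg t)
      have h2 : t * (1 - t ^ 2 / 2) ≤ t * Real.cos t :=
        mul_le_mul_of_nonneg_left hcosge ht0.le
      have h3 : 0 < t ^ 2 * (1 - t ^ 2 / 2 - t / 2) := by nlinarith
      have hcore : 0 < t ^ 2 * Real.cos t + t * Real.cos t - Real.sin t := by
        nlinarith
      nlinarith [mul_pos hπ hcore, mul_nonneg (mul_nonneg hπ.le (sq_nonneg t)) hsin.le]
    rw [hf']
    linarith
  have hd0 : (0 : ℝ) < (d : ℝ) := by exact_mod_cast hd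
  have h1 : 0 < (d : ℝ) * A ^ (d - 1) * f' := by positivity
  have h2 : (d : ℝ) * S ^ (d - 1) * g' < 0 := by
    have : 0 < (d : ℝ) * S ^ (d - 1) := by positivity
    exact mul_neg_of_pos_of_neg this hg'neg
  linarith

theorem stmt_5 : ∀ d : ℕ, 1 ≤ d →
    (∀ x ∈ Ioo (0 : ℝ) (1 / 4), deriv (D d) x > 0) ∧
    StrictMonoOn (D d) (Ioo (0 : ℝ) (1 / 4)) := by
  intro d hd
  have hder : ∀ x ∈ Ioo (0 : ℝ) (1 / 4), deriv (D d) x > 0 := by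
    intro x hx
    obtain ⟨y, hy, h⟩ := key d hd x hx
    rw [h.deriv]; exact hy
  refine ⟨hder, ?_⟩
  apply strictMonoOn_of_deriv_pos (convex_Ioo (0 : ℝ) (1 / 4))
  · intro x hx
    obtain ⟨y, _, h⟩ := key d hd x hx
    exact h.differentiableAt.continuousAt.continuousWithinAt
  · intro x hx
    rw [interior_Ioo] at hx
    exact hder x hx
end

section
/- There exists Δ with 0 < Δ < 1/4 such that for every integer d ≥ 1, D_d''(x) > 0 for all x in (0, Δ); i.e., D_d is strictly convex on (0, Δ) uniformly in d. -/
open Real Set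

/-! ### Auxiliary definitions -/

noncomputable def SS (x : ℝ) : ℝ := Real.sin (π * x) / (π * x)
noncomputable def SS1 (x : ℝ) : ℝ :=
  (Real.cos (π * x) * π * (π * x) - Real.sin (π * x) * π) / (π * x) ^ 2
noncomputable def SS2 (x : ℝ) : ℝ :=
  ((-Real.sin (π * x) * π * π * (π * x)) * (π * x) ^ 2
    - (Real.cos (π * x) * π * (π * x) - Real.sin (π * x) * π) * (2 * (π * x) * π))
    / ((π * x) ^ 2) ^ 2
noncomputable def FF (x : ℝ) : ℝ :=
  1 - Real.cos (π * x) + Real.sin (π * x) + Real.sin (π * x) / (π * x)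
noncomputable def FF1 (x : ℝ) : ℝ :=
  (Real.sin (π * x) * π + Real.cos (π * x) * π) + SS1 x
noncomputable def FF2 (x : ℝ) : ℝ :=
  (Real.cos (π * x) * π * π - Real.sin (π * x) * π * π) + SS2 x
noncomputable def DD1 (d : ℕ) (x : ℝ) : ℝ :=
  ↑d * FF x ^ (d - 1) * FF1 x - ↑d * SS x ^ (d - 1) * SS1 x

/-! ### Derivative computations -/

lemma hasDerivAt_sin_pi (x : ℝ) :
    HasDerivAt (fun y : ℝ => Real.sin (π * y)) (Real.cos (π * x) * π) x := by
  simpa [Function.comp_def] using (Real.hasDerivAt_sin (π * x)).comp x ((hasDerivAt_id x).const_mul π)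

lemma hasDerivAt_cos_pi (x : ℝ) :
    HasDerivAt (fun y : ℝ => Real.cos (π * y)) (-Real.sin (π * x) * π) x := by
  simpa [Function.comp_def] using (Real.hasDerivAt_cos (π * x)).comp x ((hasDerivAt_id x).const_mul π)

lemma hasDerivAt_pix (x : ℝ) : HasDerivAt (fun y : ℝ => π * y) π x := by
  simpa using (hasDerivAt_id x).const_mul π

lemma hasDerivAt_SS {x : ℝ} (hx : 0 < x) : HasDerivAt SS (SS1 x) x := by
  have h := (hasDerivAt_sin_pi x).div (hasDerivAt_pix x)
    (by positivity : (π : ℝ) * x ≠ 0)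
  exact h

lemma hasDerivAt_SS1 {x : ℝ} (hx : 0 < x) : HasDerivAt SS1 (SS2 x) x := by
  have hnum : HasDerivAt (fun y : ℝ => Real.cos (π * y) * π * (π * y) - Real.sin (π * y) * π)
      ((-Real.sin (π * x) * π * π) * (π * x) + (Real.cos (π * x) * π) * π
        - Real.cos (π * x) * π * π) x := by
    exact (((hasDerivAt_cos_pi x).mul_const π).mul (hasDerivAt_pix x)).sub
      ((hasDerivAt_sin_pi x).mul_const π)
  have hden : HasDerivAt (fun y : ℝ => (π * y) ^ 2) (2 * (π * x) * π) x := by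
    have := (hasDerivAt_pix x).pow 2
    simpa [mul_comm, mul_assoc, mul_left_comm, Pi.pow_def] using this
  have h := hnum.div hden (by positivity : ((π : ℝ) * x) ^ 2 ≠ 0)
  have : ((-Real.sin (π * x) * π * π) * (π * x) + (Real.cos (π * x) * π) * π
        - Real.cos (π * x) * π * π) = -Real.sin (π * x) * π * π * (π * x) := by ring
  rw [this] at h
  exact h

lemma hasDerivAt_FF {x : ℝ} (hx : 0 < x) : HasDerivAt FF (FF1 x) x := by
  have h1 : HasDerivAt (fun y : ℝ => 1 - Real.cos (π * y) + Real.sin (π * y))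
      (Real.sin (π * x) * π + Real.cos (π * x) * π) x := by
    have := ((hasDerivAt_const x (1:ℝ)).sub (hasDerivAt_cos_pi x)).add (hasDerivAt_sin_pi x)
    simpa [sub_eq_add_neg, neg_mul, Pi.add_def, Pi.neg_def] using this.congr_deriv (by ring)
  exact h1.add (hasDerivAt_SS hx)

lemma hasDerivAt_FF1 {x : ℝ} (hx : 0 < x) : HasDerivAt FF1 (FF2 x) x := by
  have h1 : HasDerivAt (fun y : ℝ => Real.sin (π * y) * π + Real.cos (π * y) * π)
      (Real.cos (π * x) * π * π - Real.sin (π * x) * π * π) x := by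
    have := ((hasDerivAt_sin_pi x).mul_const π).add ((hasDerivAt_cos_pi x).mul_const π)
    exact this.congr_deriv (by ring)
  exact h1.add (hasDerivAt_SS1 hx)

lemma hasDerivAt_D {d : ℕ} {x : ℝ} (hx : 0 < x) : HasDerivAt (D d) (DD1 d x) x := by
  have h := ((hasDerivAt_FF hx).pow d).sub ((hasDerivAt_SS hx).pow d)
  exact h

/-! ### Sign estimates -/

lemma t_facts {x : ℝ} (hx : 0 < x) (hx' : x < 1/12) :
    0 < π * x ∧ π * x < 0.27 := by
  constructor
  · positivity
  · nlinarith [pi_lt_d2, pi_pos]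

set_option maxHeartbeats 1000000 in
lemma sin_cos_est {t : ℝ} (ht : 0 < t) (ht' : t < 0.27) :
    t * Real.cos t < Real.sin t ∧
    Real.sin t - t * Real.cos t ≤ t ^ 3 / 2 ∧
    2 * (Real.sin t - t * Real.cos t) < t ^ 2 * Real.sin t ∧
    -(t ^ 3) / 3 - t ^ 4 ≤ 2 * (Real.sin t - t * Real.cos t) - t ^ 2 * Real.sin t ∧
    0 < Real.sin t ∧ Real.sin t < t ∧
    1 - t ^ 2 / 2 ≤ Real.cos t ∧ Real.cos t ≤ 1 := by
  have h1 : |t| ≤ 1 := by rw [abs_of_pos ht]; linarith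
  have hs := abs_le.1 (Real.sin_bound h1)
  have hc := abs_le.1 (Real.cos_bound h1)
  rw [abs_of_pos ht] at hs hc
  have hsp : 0 < Real.sin t := Real.sin_pos_of_pos_of_lt_pi ht (by nlinarith [pi_gt_three])
  have hsl : Real.sin t < t := Real.sin_lt ht
  have hcu : Real.cos t ≤ 1 := Real.cos_le_one t
  have hcl : 1 - t ^ 2 / 2 ≤ Real.cos t := Real.one_sub_sq_div_two_le_cos
  have ht3 : (0:ℝ) < t ^ 3 := by positivity
  have h4 : t ^ 4 ≤ 0.27 * t ^ 3 := by nlinarith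
  have h5 : t ^ 5 ≤ 0.27 ^ 2 * t ^ 3 := by nlinarith
  have h6 : t ^ 6 ≤ 0.27 ^ 3 * t ^ 3 := by nlinarith
  -- t * cos t lower bound
  have ha : t - t ^ 3 / 2 - (5 / 96) * t ^ 5 ≤ t * Real.cos t := by nlinarith [hc.1]
  -- t * cos t upper bound
  have ha' : t * Real.cos t ≤ t - t ^ 3 / 2 + (5 / 96) * t ^ 5 := by nlinarith [hc.2]
  -- t^2 * sin t lower bound
  have hb : t ^ 3 - t ^ 5 / 6 - (5 / 96) * t ^ 6 ≤ t ^ 2 * Real.sin t := by nlinarith [hs.1]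
  have hb' : t ^ 2 * Real.sin t ≤ t ^ 3 - t ^ 5 / 6 + (5 / 96) * t ^ 6 := by nlinarith [hs.2]
  refine ⟨by nlinarith [hs.1, ha'], by nlinarith [ha], by nlinarith [hs.2, ha, hb],
    by nlinarith [hs.1, ha', hb'], hsp, hsl, hcl, hcu⟩

set_option maxHeartbeats 2000000 in
lemma key_estimates {x : ℝ} (hx : 0 < x) (hx' : x < 1/12) :
    1 ≤ FF x ∧ 0 < FF1 x ∧ 0 < FF2 x ∧
    0 < SS x ∧ SS x ≤ 1 ∧ SS1 x ≤ 0 ∧ -FF1 x ≤ SS1 x ∧ SS2 x < 0 := by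
  obtain ⟨ht, ht'⟩ := t_facts hx hx'
  set t := π * x with htdef
  obtain ⟨e1, e2, e3, e4, e5, e6, e7, e8⟩ := sin_cos_est ht ht'
  have hpi : 0 < π := pi_pos
  have hpi2 : (0:ℝ) < π ^ 2 := by positivity
  have hS1 : SS1 x = π * (t * Real.cos t - Real.sin t) / t ^ 2 := by
    unfold SS1; rw [← htdef]; ring
  have hS2 : SS2 x = π ^ 2 * (2 * (Real.sin t - t * Real.cos t) - t ^ 2 * Real.sin t) / t ^ 3 := by
    unfold SS2; rw [← htdef]; field_simp; ring
  have ht2 : (0:ℝ) < t ^ 2 := by positivity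
  have ht3 : (0:ℝ) < t ^ 3 := by positivity
  have hS1neg : SS1 x ≤ 0 := by
    rw [hS1]
    apply div_nonpos_of_nonpos_of_nonneg _ (le_of_lt ht2)
    nlinarith
  have hS1lb : -(π * t / 2) ≤ SS1 x := by
    rw [hS1, le_div_iff₀ ht2]
    nlinarith [mul_le_mul_of_nonneg_left e2 hpi.le]
  have hS2neg : SS2 x < 0 := by
    rw [hS2]
    refine div_neg_of_neg_of_pos ?_ ht3
    have hneg : 2 * (Real.sin t - t * Real.cos t) - t ^ 2 * Real.sin t < 0 := by linarith
    exact mul_neg_of_pos_of_neg hpi2 hneg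
  have hS2lb : -(π ^ 2 / 3 + π ^ 2 * t) ≤ SS2 x := by
    rw [hS2, le_div_iff₀ ht3]
    nlinarith [mul_le_mul_of_nonneg_left e4 hpi2.le]
  have hSpos : 0 < SS x := by
    unfold SS; rw [← htdef]; positivity
  have hSle : SS x ≤ 1 := by
    unfold SS; rw [← htdef, div_le_one ht]; linarith
  have hFge : 1 ≤ FF x := by
    unfold FF; rw [← htdef]
    have h : Real.cos t ≤ Real.sin t / t := by
      rw [le_div_iff₀ ht]; nlinarith
    linarith
  have hpc : π * (1 - t ^ 2 / 2) ≤ π * Real.cos t := mul_le_mul_of_nonneg_left e7 hpi.le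
  have hps : π * Real.sin t ≤ π * t := mul_le_mul_of_nonneg_left e6.le hpi.le
  have hps' : 0 ≤ π * Real.sin t := mul_nonneg hpi.le e5.le
  have hpt : π * t < π * 0.27 := mul_lt_mul_of_pos_left ht' hpi
  have hpt2 : π * t ^ 2 ≤ π * (0.27 * t) := by nlinarith
  have hF1pos : 0 < FF1 x := by
    unfold FF1; rw [← htdef]
    nlinarith [hS1lb, hpc, hps', hpt, hpt2]
  have hF1S1 : -FF1 x ≤ SS1 x := by
    unfold FF1; rw [← htdef]
    nlinarith [hS1lb, hpc, hps', hpt, hpt2]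
  have hF2pos : 0 < FF2 x := by
    unfold FF2; rw [← htdef]
    have hc2 : π ^ 2 * (1 - t ^ 2 / 2) ≤ π ^ 2 * Real.cos t := mul_le_mul_of_nonneg_left e7 hpi2.le
    have hs2 : π ^ 2 * Real.sin t ≤ π ^ 2 * t := mul_le_mul_of_nonneg_left e6.le hpi2.le
    have hq : π ^ 2 * t ^ 2 ≤ π ^ 2 * (0.27 * t) := by nlinarith
    have hq2 : π ^ 2 * t < π ^ 2 * 0.27 := mul_lt_mul_of_pos_left ht' hpi2
    nlinarith [hS2lb, hc2, hs2, hq, hq2]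
  exact ⟨hFge, hF1pos, hF2pos, hSpos, hSle, hS1neg, hF1S1, hS2neg⟩

/-! ### Main theorem -/

set_option maxHeartbeats 1000000 in
theorem stmt_6 : ∃ Δ : ℝ, 0 < Δ ∧ Δ < 1 / 4 ∧
    ∀ d : ℕ, 1 ≤ d → ∀ x ∈ Ioo (0 : ℝ) Δ, deriv (deriv (D d)) x > 0 := by
  refine ⟨1/12, by norm_num, by norm_num, ?_⟩
  intro d hd x hx
  obtain ⟨hx0, hx1⟩ := hx
  -- deriv (D d) agrees with DD1 d near x
  have hEv : deriv (D d) =ᶠ[nhds x] DD1 d := by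
    filter_upwards [Ioi_mem_nhds hx0] with y hy
    exact (hasDerivAt_D hy).deriv
  rw [hEv.deriv_eq]
  -- second derivative
  have h2 : HasDerivAt (DD1 d)
      ((↑d * (↑(d - 1) * FF x ^ (d - 1 - 1) * FF1 x) * FF1 x + ↑d * FF x ^ (d - 1) * FF2 x)
        - (↑d * (↑(d - 1) * SS x ^ (d - 1 - 1) * SS1 x) * SS1 x
            + ↑d * SS x ^ (d - 1) * SS2 x)) x := by
    exact ((((hasDerivAt_FF hx0).pow (d-1)).const_mul (d:ℝ)).mul (hasDerivAt_FF1 hx0)).sub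
      ((((hasDerivAt_SS hx0).pow (d-1)).const_mul (d:ℝ)).mul (hasDerivAt_SS1 hx0))
  rw [h2.deriv]
  -- positivity
  obtain ⟨hF, hF1, hF2, hS, hSle, hS1, hS1F, hS2⟩ := key_estimates hx0 hx1
  have hd1 : (1:ℝ) ≤ (d:ℝ) := by exact_mod_cast hd
  have he : (0:ℝ) ≤ (↑(d-1) : ℝ) := Nat.cast_nonneg _
  set a := FF x; set a1 := FF1 x; set a2 := FF2 x
  set b := SS x; set b1 := SS1 x; set b2 := SS2 x
  have hA1 : (1:ℝ) ≤ a ^ (d-1) := one_le_pow₀ hF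
  have hA2 : (1:ℝ) ≤ a ^ (d-1-1) := one_le_pow₀ hF
  have hB1 : b ^ (d-1) ≤ 1 := pow_le_one₀ hS.le hSle
  have hB1p : 0 < b ^ (d-1) := pow_pos hS _
  have hB2 : b ^ (d-1-1) ≤ 1 := pow_le_one₀ hS.le hSle
  have hB2p : 0 < b ^ (d-1-1) := pow_pos hS _
  have hsq : b1 * b1 ≤ a1 * a1 := by nlinarith
  have hcross : (↑(d-1) : ℝ) * (b ^ (d-1-1) * (b1 * b1)) ≤ ↑(d-1) * (a ^ (d-1-1) * (a1 * a1)) := by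
    apply mul_le_mul_of_nonneg_left _ he
    calc b ^ (d-1-1) * (b1 * b1) ≤ 1 * (b1 * b1) :=
          mul_le_mul_of_nonneg_right hB2 (mul_self_nonneg _)
      _ ≤ 1 * (a1 * a1) := by nlinarith
      _ ≤ a ^ (d-1-1) * (a1 * a1) :=
          mul_le_mul_of_nonneg_right hA2 (mul_self_nonneg _)
  have hterm1 : (0:ℝ) < ↑d * a ^ (d-1) * a2 := by positivity
  have hterm2 : ↑d * b ^ (d-1) * b2 < 0 := by
    apply mul_neg_of_pos_of_neg _ hS2
    positivity
  nlinarith [hcross, hterm1, hterm2, mul_le_mul_of_nonneg_left hcross (le_trans zero_le_one hd1)]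
end

section
/- Fix a constant r > 0. If for each integer d ≥ 1, x_d ∈ (0, 1/4) satisfies D_d(x_d) = r, then lim_{d→∞} x_d = 0. -/
open Real Set Filter

theorem stmt_8 (r : ℝ) (hr : 0 < r) (x : ℕ → ℝ)
    (hx : ∀ d : ℕ, 1 ≤ d → x d ∈ Ioo (0 : ℝ) (1 / 4) ∧ D d (x d) = r) :
    Tendsto x atTop (nhds 0) := by
  rw [Metric.tendsto_atTop]
  intro ε hε
  have hπ := Real.pi_pos
  set ε' : ℝ := min ε (1/8) with hε'def
  have hε'pos : 0 < ε' := lt_min hε (by norm_num)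
  have hε'le : ε' ≤ 1/8 := min_le_right _ _
  set δ : ℝ := Real.sin (π * ε') with hδdef
  have hδpos : 0 < δ := Real.sin_pos_of_pos_of_lt_pi (by positivity)
    (by nlinarith)
  have h1δ : 1 < 1 + δ := by linarith
  obtain ⟨N, hN⟩ := Filter.eventually_atTop.mp
    ((tendsto_pow_atTop_atTop_of_one_lt h1δ).eventually_ge_atTop (r + 1))
  refine ⟨max N 1, fun d hd => ?_⟩
  have hd1 : 1 ≤ d := le_trans (le_max_right N 1) hd
  have hdN : N ≤ d := le_trans (le_max_left N 1) hd
  obtain ⟨⟨hx0, hx4⟩, hD⟩ := hx d hd1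
  rw [Real.dist_eq, sub_zero, abs_of_pos hx0]
  -- Suffices to show x d < ε'
  by_contra hcon
  push_neg at hcon
  have hxε' : ε' ≤ x d := by
    by_contra h
    push_neg at h
    exact absurd (lt_of_lt_of_le h (min_le_left _ _)) (not_lt.mpr hcon)
  set t : ℝ := π * x d with htdef
  have ht0 : 0 < t := by positivity
  have ht2 : t < π / 2 := by nlinarith
  have hcos : 0 < Real.cos t := Real.cos_pos_of_mem_Ioo ⟨by linarith, ht2⟩
  have htan : t < Real.tan t := Real.lt_tan ht0 ht2
  have hsinc_gt : Real.cos t < Real.sin t / t := by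
    rw [Real.tan_eq_sin_div_cos] at htan
    rw [lt_div_iff₀ ht0]
    have := (lt_div_iff₀ hcos).mp htan
    nlinarith
  have hsin_mono : δ ≤ Real.sin t := by
    apply Real.strictMonoOn_sin.monotoneOn
    · exact ⟨by nlinarith [mul_pos hπ hε'pos], by nlinarith⟩
    · exact ⟨by linarith, le_of_lt ht2⟩
    · nlinarith
  have hbase : 1 + δ ≤ 1 - Real.cos t + Real.sin t + Real.sin t / t := by
    linarith
  have hsinc_pos : 0 < Real.sin t / t :=
    div_pos (Real.sin_pos_of_pos_of_lt_pi ht0 (by linarith)) ht0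
  have hsinc_lt1 : Real.sin t / t < 1 := by
    rw [div_lt_one ht0]; exact Real.sin_lt ht0
  have hpow1 : (1 + δ) ^ d ≤ (1 - Real.cos t + Real.sin t + Real.sin t / t) ^ d :=
    pow_le_pow_left₀ (by positivity) hbase d
  have hpow2 : (Real.sin t / t) ^ d < 1 :=
    pow_lt_one₀ (le_of_lt hsinc_pos) hsinc_lt1 (by omega)
  have hDbig : r < D d (x d) := by
    have := hN d hdN
    unfold D
    rw [← htdef]
    linarith
  linarith [hDbig, hD.ge]
end

section
/- Let c > 1 and h(x) = -cos(x) + sin(x) + sin(x)/x. Then lim_{x→0⁺} ((1 + h(x))^{ln(c)/x} - c)/x = -c·ln(c)/6. -/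
open Real Set Filter
open Topology

noncomputable def h (x : ℝ) : ℝ := -Real.cos x + Real.sin x + Real.sin x / x

theorem stmt_12 (c : ℝ) (hc : 1 < c) :
    Tendsto (fun x : ℝ => ((1 + h x) ^ (Real.log c / x) - c) / x)
      (nhdsWithin 0 (Ioi 0)) (nhds (-(c * Real.log c) / 6)) := by
  have hc0 : (0:ℝ) < c := lt_trans one_pos hc
  set L := Real.log c with hLdef
  set l := nhdsWithin (0:ℝ) (Ioi 0) with hldef
  have hmem : ∀ᶠ x in l, x ∈ Ioo (0:ℝ) 1 := Ioo_mem_nhdsGT_of_mem (by norm_num)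
  have hxpos : ∀ᶠ x in l, 0 < x := hmem.mono fun x hx => hx.1
  have tends_id : Tendsto (fun x : ℝ => x) l (𝓝 0) :=
    tendsto_id.mono_left nhdsWithin_le_nhds
  have tends_cx : ∀ C : ℝ, Tendsto (fun x : ℝ => C * x) l (𝓝 0) := fun C => by
    simpa using tends_id.const_mul C
  have tends_cx2 : ∀ C : ℝ, Tendsto (fun x : ℝ => C * x ^ 2) l (𝓝 0) := fun C => by
    simpa using (tends_id.pow 2).const_mul C
  -- (sin x - x)/x^3 → -1/6
  have T2 : Tendsto (fun x => (Real.sin x - x) / x ^ 3) l (𝓝 (-(1/6))) := by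
    rw [← tendsto_sub_nhds_zero_iff]
    apply squeeze_zero_norm' (a := fun x => (5/96) * x) _ (tends_cx _)
    filter_upwards [hmem] with x hx
    have hx0 : (0:ℝ) < x := hx.1
    have hb := Real.sin_bound (x := x) (by rw [abs_of_pos hx0]; exact hx.2.le)
    have heq : (Real.sin x - x) / x ^ 3 - -(1/6) = (Real.sin x - (x - x ^ 3 / 6)) / x ^ 3 := by
      field_simp
      ring
    rw [heq, Real.norm_eq_abs, abs_div, abs_of_pos (pow_pos hx0 3)]
    calc |Real.sin x - (x - x ^ 3 / 6)| / x ^ 3 ≤ (|x| ^ 4 * (5/96)) / x ^ 3 := by gcongr; refine hb.trans ?_; rw [abs_of_pos hx0]; nlinarith [mul_le_mul_of_nonneg_left hx.2.le (pow_pos hx0 4).le, pow_pos hx0 4]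
      _ = 5/96 * x := by rw [abs_of_pos hx0]; field_simp
  -- (sin x - x)/x^2 → 0
  have T2' : Tendsto (fun x => (Real.sin x - x) / x ^ 2) l (𝓝 0) := by
    have h1 : Tendsto (fun x => ((Real.sin x - x) / x ^ 3) * x) l (𝓝 (-(1/6) * 0)) :=
      T2.mul tends_id
    rw [mul_zero] at h1
    refine h1.congr' ?_
    filter_upwards [hxpos] with x hx
    have hx0 : x ≠ 0 := ne_of_gt hx
    field_simp
  -- (1 - cos x)/x^2 → 1/2
  have T1 : Tendsto (fun x => (1 - Real.cos x) / x ^ 2) l (𝓝 (1/2)) := by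
    rw [← tendsto_sub_nhds_zero_iff]
    apply squeeze_zero_norm' (a := fun x => (5/96) * x ^ 2) _ (tends_cx2 _)
    filter_upwards [hmem] with x hx
    have hx0 : (0:ℝ) < x := hx.1
    have hb := Real.cos_bound (x := x) (by rw [abs_of_pos hx0]; exact hx.2.le)
    have heq : (1 - Real.cos x) / x ^ 2 - 1/2 = -((Real.cos x - (1 - x ^ 2 / 2)) / x ^ 2) := by
      field_simp
      ring
    rw [heq, Real.norm_eq_abs, abs_neg, abs_div, abs_of_pos (pow_pos hx0 2)]
    calc |Real.cos x - (1 - x ^ 2 / 2)| / x ^ 2 ≤ (|x| ^ 4 * (5/96)) / x ^ 2 := by gcongr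
      _ = 5/96 * x ^ 2 := by rw [abs_of_pos hx0]; field_simp
  -- (h x - x)/x^2 → 1/3
  have A : Tendsto (fun x => (h x - x) / x ^ 2) l (𝓝 (1/3)) := by
    have comb := (T1.add T2').add T2
    have hv : (1/2 + 0 + -(1/6) : ℝ) = 1/3 := by norm_num
    rw [hv] at comb
    refine comb.congr' ?_
    filter_upwards [hxpos] with x hx
    have hx0 : x ≠ 0 := ne_of_gt hx
    simp only [h]
    field_simp
    ring
  -- h x / x → 1
  have B : Tendsto (fun x => h x / x) l (𝓝 1) := by
    have h1 : Tendsto (fun x => ((h x - x) / x ^ 2) * x + 1) l (𝓝 ((1/3) * 0 + 1)) :=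
      (A.mul tends_id).add tendsto_const_nhds
    rw [mul_zero, zero_add] at h1
    refine h1.congr' ?_
    filter_upwards [hxpos] with x hx
    have hx0 : x ≠ 0 := ne_of_gt hx
    field_simp
    ring
  -- h → 0
  have hh0 : Tendsto h l (𝓝 0) := by
    have h1 : Tendsto (fun x => (h x / x) * x) l (𝓝 (1 * 0)) := B.mul tends_id
    rw [one_mul] at h1
    refine h1.congr' ?_
    filter_upwards [hxpos] with x hx
    exact div_mul_cancel₀ _ (ne_of_gt hx)
  -- eventually |h x| < 1/2
  have habs : ∀ᶠ t in 𝓝 (0:ℝ), |t| < 1/2 := by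
    have hI : Ioo (-(1/2):ℝ) (1/2) ∈ 𝓝 (0:ℝ) := Ioo_mem_nhds (by norm_num) (by norm_num)
    filter_upwards [hI] with t ht
    rw [abs_lt]; exact ⟨ht.1, ht.2⟩
  have hsmall : ∀ᶠ x in l, |h x| < 1/2 := hh0.eventually habs
  have hpos1 : ∀ᶠ x in l, 0 < 1 + h x := by
    filter_upwards [hsmall] with x hx
    have := abs_lt.mp hx
    linarith [this.1]
  -- G : (log (1+h) - h + h^2/2)/x^2 → 0
  have G : Tendsto (fun x => (Real.log (1 + h x) - h x + (h x) ^ 2 / 2) / x ^ 2) l (𝓝 0) := by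
    have rhs : Tendsto (fun x => 2 * |h x / x| ^ 2 * |h x|) l (𝓝 (2 * |(1:ℝ)| ^ 2 * |(0:ℝ)|)) :=
      ((B.abs.pow 2).const_mul 2).mul hh0.abs
    have hv : (2 * |(1:ℝ)| ^ 2 * |(0:ℝ)| : ℝ) = 0 := by norm_num
    rw [hv] at rhs
    apply squeeze_zero_norm' _ rhs
    filter_upwards [hxpos, hsmall] with x hx hs
    have hx0 : (0:ℝ) < x := hx
    have hlog := Real.abs_log_sub_add_sum_range_le (x := -h x) (by rw [abs_neg]; linarith) 2
    have hsum : ∑ i ∈ Finset.range 2, (-h x) ^ (i + 1) / ((i:ℝ) + 1)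
        = -h x + (h x) ^ 2 / 2 := by
      simp [Finset.sum_range_succ]
      ring
    rw [hsum, abs_neg] at hlog
    have hlog' : |Real.log (1 + h x) - h x + (h x) ^ 2 / 2| ≤ |h x| ^ 3 / (1 - |h x|) := by
      have : (1:ℝ) - -h x = 1 + h x := by ring
      rw [this] at hlog
      calc |Real.log (1 + h x) - h x + (h x) ^ 2 / 2|
          = |-h x + (h x) ^ 2 / 2 + Real.log (1 + h x)| := by ring_nf
        _ ≤ |h x| ^ (2 + 1) / (1 - |h x|) := hlog
        _ = |h x| ^ 3 / (1 - |h x|) := by norm_num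
    have hden : (1:ℝ)/2 ≤ 1 - |h x| := by linarith
    have hbd : |h x| ^ 3 / (1 - |h x|) ≤ 2 * |h x| ^ 3 := by
      rw [div_le_iff₀ (by linarith)]
      have h3 : (0:ℝ) ≤ |h x| ^ 3 := by positivity
      nlinarith
    rw [Real.norm_eq_abs, abs_div, abs_of_pos (pow_pos hx0 2)]
    calc |Real.log (1 + h x) - h x + (h x) ^ 2 / 2| / x ^ 2
        ≤ (2 * |h x| ^ 3) / x ^ 2 := by gcongr; exact hlog'.trans hbd
      _ = 2 * |h x / x| ^ 2 * |h x| := by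
          rw [abs_div, abs_of_pos hx0, div_pow]
          rw [pow_succ]
          field_simp
  -- K : (log(1+h x) - x)/x^2 → -1/6
  have K : Tendsto (fun x => (Real.log (1 + h x) - x) / x ^ 2) l (𝓝 (-(1/6))) := by
    have negsq : Tendsto (fun x => (-(1/2)) * (h x / x) ^ 2) l (𝓝 ((-(1/2)) * 1 ^ 2)) :=
      (B.pow 2).const_mul _
    have comb := (G.add negsq).add A
    have hv : (0 + (-(1/2)) * 1 ^ 2 + 1/3 : ℝ) = -(1/6) := by norm_num
    rw [hv] at comb
    refine comb.congr' ?_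
    filter_upwards [hxpos] with x hx
    have hx0 : x ≠ 0 := ne_of_gt hx
    field_simp
    ring
  -- F
  set F : ℝ → ℝ := fun x => L * Real.log (1 + h x) / x - L with hFdef
  have Fx : Tendsto (fun x => F x / x) l (𝓝 (L * -(1/6))) := by
    have := K.const_mul L
    refine this.congr' ?_
    filter_upwards [hxpos] with x hx
    have hx0 : x ≠ 0 := ne_of_gt hx
    simp only [hFdef]
    field_simp
  have F0 : Tendsto F l (𝓝 0) := by
    have h1 : Tendsto (fun x => (F x / x) * x) l (𝓝 (L * -(1/6) * 0)) := Fx.mul tends_id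
    rw [mul_zero] at h1
    refine h1.congr' ?_
    filter_upwards [hxpos] with x hx
    exact div_mul_cancel₀ _ (ne_of_gt hx)
  have hF1 : ∀ᶠ x in l, |F x| ≤ 1 := by
    have : Ioo (-(1:ℝ)) 1 ∈ 𝓝 (0:ℝ) := Ioo_mem_nhds (by norm_num) (by norm_num)
    filter_upwards [F0.eventually this] with x hx
    rw [abs_le]; exact ⟨hx.1.le, hx.2.le⟩
  -- (exp F - 1 - F)/x → 0
  have E1 : Tendsto (fun x => (Real.exp (F x) - 1 - F x) / x) l (𝓝 0) := by
    have rhs : Tendsto (fun x => |F x / x| * |F x|) l (𝓝 (|L * -(1/6)| * |(0:ℝ)|)) :=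
      Fx.abs.mul F0.abs
    have hv : (|L * -(1/6)| * |(0:ℝ)| : ℝ) = 0 := by simp
    rw [hv] at rhs
    apply squeeze_zero_norm' _ rhs
    filter_upwards [hxpos, hF1] with x hx hf
    have hb := Real.abs_exp_sub_one_sub_id_le hf
    rw [Real.norm_eq_abs, abs_div, abs_of_pos hx]
    calc |Real.exp (F x) - 1 - F x| / x ≤ (F x) ^ 2 / x := by gcongr
      _ = |F x / x| * |F x| := by
          rw [abs_div, abs_of_pos hx, ← sq_abs (F x)]
          field_simp
  -- (exp F - 1)/x → -L/6
  have E2 : Tendsto (fun x => (Real.exp (F x) - 1) / x) l (𝓝 (0 + L * -(1/6))) := by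
    have := E1.add Fx
    refine this.congr' ?_
    filter_upwards [hxpos] with x hx
    have hx0 : x ≠ 0 := ne_of_gt hx
    field_simp
    ring
  -- final
  have final : Tendsto (fun x => c * ((Real.exp (F x) - 1) / x)) l (𝓝 (c * (0 + L * -(1/6)))) :=
    E2.const_mul c
  have hv : (c * (0 + L * -(1/6)) : ℝ) = -(c * L) / 6 := by ring
  rw [hv] at final
  refine final.congr' ?_
  filter_upwards [hxpos, hpos1] with x hx hp
  have hx0 : x ≠ 0 := ne_of_gt hx
  have hrw : (1 + h x) ^ (L / x) = Real.exp (F x) * c := by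
    rw [Real.rpow_def_of_pos hp]
    rw [show Real.log (1 + h x) * (L / x) = F x + L by simp only [hFdef]; ring]
    rw [Real.exp_add, Real.exp_log hc0]
  rw [hrw]
  field_simp
end

section
/- Let 0 < A ≤ B and set ω_d = (1/(πd))·ln(1 + A/B). Then lim_{d→∞} d·(A/B - D_d(ω_d)) = (A/(6B))·[ln(1 + A/B)]², where D_d(x) = (1 - cos(πx) + sin(πx) + sinc(πx))^d - (sinc(πx))^d. -/
open Real Set Filter
open Topology

lemma sinc_est {t : ℝ} (ht : 0 < t) (ht1 : t ≤ 1) :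
    |Real.sin t / t - (1 - t^2/6)| ≤ t^3 * (5/96) := by
  have h := Real.sin_bound (x := t) (by rw [abs_of_pos ht]; exact ht1)
  rw [abs_of_pos ht] at h
  have he : Real.sin t / t - (1 - t^2/6) = (Real.sin t - (t - t^3/6)) / t := by
    field_simp
  rw [he, abs_div, abs_of_pos ht, div_le_iff₀ ht]
  nlinarith [h, pow_pos ht 4, mul_le_mul_of_nonneg_left ht1 (pow_pos ht 4).le]

lemma F_est {t : ℝ} (ht : 0 < t) (ht1 : t ≤ 1/2) :
    |(1 - Real.cos t + Real.sin t + Real.sin t / t) - (1 + t + t^2/3)| ≤ t^3 := by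
  have h1 := abs_le.1 (Real.sin_bound (x := t) (by rw [abs_of_pos ht]; linarith))
  have h2 := abs_le.1 (Real.cos_bound (x := t) (by rw [abs_of_pos ht]; linarith))
  have h3 := abs_le.1 (sinc_est ht (by linarith))
  rw [abs_of_pos ht] at h1 h2
  rw [abs_le]
  constructor <;> nlinarith [pow_pos ht 3, pow_pos ht 4]

lemma logpoly {y : ℝ} (hy : |y| < 1) :
    |(-y + (-y)^2/2) + Real.log (1 + y)| ≤ |y|^3 / (1 - |y|) := by
  have h := Real.abs_log_sub_add_sum_range_le (x := -y) (by rwa [abs_neg]) 2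
  rw [Finset.sum_range_succ, Finset.sum_range_succ, Finset.sum_range_zero, abs_neg] at h
  norm_num at h ⊢
  convert h using 3

lemma log_quadF {y t : ℝ} (ht : 0 < t) (ht1 : t ≤ 1/2)
    (h1 : t + t^2/3 - t^3 ≤ y) (h2 : y ≤ t + t^2/3 + t^3) :
    |Real.log (1 + y) - t + t^2/6| ≤ 100 * t^3 := by
  have hy_nn : 0 ≤ y := by nlinarith [pow_pos ht 2, pow_pos ht 3]
  have hy_le : |y| ≤ 17*t/12 := by
    rw [abs_of_nonneg hy_nn]; nlinarith
  have hy_lt : |y| < 1 := by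
    calc |y| ≤ 17*t/12 := hy_le
    _ < 1 := by linarith
  have hlog := logpoly hy_lt
  have hpos : (0:ℝ) < 1 - |y| := by linarith
  have h3 : |y|^3 / (1 - |y|) ≤ 11 * t^3 := by
    rw [div_le_iff₀ hpos]
    have h4 : |y|^3 ≤ (17*t/12)^3 := pow_le_pow_left₀ (abs_nonneg y) hy_le 3
    nlinarith [abs_nonneg y, pow_pos ht 3, hy_le]
  have h5 : |y - y^2/2 - t + t^2/6| ≤ 3*t^3 := by
    have hq1 : 0 ≤ 1 - t - t^2/3 := by nlinarith
    have hm1 : 0 ≤ (t + t^2/3 + t^3 - y) * (1 - t - t^2/3) :=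
      mul_nonneg (by linarith) hq1
    have hm2 : 0 ≤ (y - (t + t^2/3 - t^3)) * (1 - t - t^2/3) :=
      mul_nonneg (by linarith) hq1
    rw [abs_le]
    constructor <;> nlinarith [sq_nonneg (y - t - t^2/3), pow_pos ht 3, pow_pos ht 2]
  have hid : Real.log (1 + y) - t + t^2/6 =
      ((-y + (-y)^2/2) + Real.log (1 + y)) + (y - y^2/2 - t + t^2/6) := by ring
  rw [hid]
  calc |((-y + (-y)^2/2) + Real.log (1 + y)) + (y - y^2/2 - t + t^2/6)|
      ≤ |(-y + (-y)^2/2) + Real.log (1 + y)| + |y - y^2/2 - t + t^2/6| := abs_add_le _ _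
    _ ≤ 11*t^3 + 3*t^3 := add_le_add (le_trans hlog h3) h5
    _ ≤ 100 * t^3 := by nlinarith [pow_pos ht 3]

lemma logF_est {t : ℝ} (ht : 0 < t) (ht1 : t ≤ 1/2) :
    |Real.log (1 - Real.cos t + Real.sin t + Real.sin t / t) - t + t^2/6| ≤ 100 * t^3 := by
  have hFe := abs_le.1 (F_est ht ht1)
  have h := log_quadF (y := (1 - Real.cos t + Real.sin t + Real.sin t / t) - 1) ht ht1
    (by linarith [hFe.1]) (by linarith [hFe.2])
  have he : (1:ℝ) + ((1 - Real.cos t + Real.sin t + Real.sin t / t) - 1)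
      = 1 - Real.cos t + Real.sin t + Real.sin t / t := by ring
  rwa [he] at h

lemma logG_est {t : ℝ} (ht : 0 < t) (ht1 : t ≤ 1/2) :
    |Real.log (Real.sin t / t) + t^2/6| ≤ 100 * t^3 := by
  have hz := abs_le.1 (sinc_est ht (by linarith))
  set z : ℝ := Real.sin t / t - 1 with hzd
  have hz1 : -(t^2/6) - t^3*(5/96) ≤ z ∧ z ≤ -(t^2/6) + t^3*(5/96) := by
    constructor <;> [nlinarith [hz.1]; nlinarith [hz.2]]
  have hzabs : |z| ≤ t^2/2 := by
    rw [abs_le]; constructor <;> nlinarith [hz1.1, hz1.2, pow_pos ht 2, pow_pos ht 3]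
  have hz_lt : |z| < 1 := by nlinarith [hzabs, pow_pos ht 2]
  have hlog := Real.abs_log_sub_add_sum_range_le (x := -z) (by rwa [abs_neg]) 1
  rw [Finset.sum_range_succ, Finset.sum_range_zero, abs_neg] at hlog
  norm_num at hlog
  have hF1 : (1 : ℝ) + z = Real.sin t / t := by rw [hzd]; ring
  rw [hF1] at hlog
  have hpos : (0:ℝ) < 1 - |z| := by linarith
  have h3 : |z|^2 / (1 - |z|) ≤ t^3 := by
    rw [div_le_iff₀ hpos]
    nlinarith [pow_le_pow_left₀ (abs_nonneg z) hzabs 2, pow_pos ht 3, hzabs, sq_nonneg t,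
      abs_nonneg z]
  have hid : Real.log (Real.sin t / t) + t^2/6 =
      (-z + Real.log (Real.sin t / t)) + (z + t^2/6) := by ring
  rw [hid]
  calc |(-z + Real.log (Real.sin t / t)) + (z + t^2/6)|
      ≤ |(-z + Real.log (Real.sin t / t))| + |z + t^2/6| := abs_add_le _ _
    _ ≤ t^3 + t^3*(5/96) := by
        refine add_le_add (le_trans ?_ h3) ?_
        · rw [sq_abs]; exact hlog
        · rw [abs_le]; constructor <;> [linarith [hz1.1]; linarith [hz1.2]]
    _ ≤ 100 * t^3 := by nlinarith [pow_pos ht 3]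

lemma G_pos {t : ℝ} (ht : 0 < t) (ht1 : t ≤ 1) : 0 < Real.sin t / t :=
  div_pos (Real.sin_pos_of_pos_of_lt_pi ht (by linarith [Real.pi_gt_three])) ht

lemma Fn_pos {t : ℝ} (ht : 0 < t) (ht1 : t ≤ 1) :
    0 < 1 - Real.cos t + Real.sin t + Real.sin t / t := by
  have h1 := Real.cos_le_one t
  have h2 := Real.sin_pos_of_pos_of_lt_pi ht (by linarith [Real.pi_gt_three])
  have h3 := G_pos ht ht1
  linarith

theorem aux (c : ℝ) (hc : 0 < c) (hc1 : c ≤ 1) :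
    Tendsto (fun d : ℕ => (d : ℝ) * (c - D d (Real.log (1 + c) / (π * d))))
      atTop (nhds (c / 6 * (Real.log (1 + c)) ^ 2)) := by
  set L := Real.log (1 + c) with hLd
  have hL : 0 < L := Real.log_pos (by linarith)
  have hL1 : L < 1 := by
    have h2 : L ≤ Real.log 2 := Real.log_le_log (by linarith) (by linarith)
    linarith [Real.log_two_lt_d9]
  have hexp : Real.exp L = 1 + c := Real.exp_log (by linarith)
  set aa : ℕ → ℝ := fun d => (d : ℝ) * Real.log (1 - Real.cos (L/d) + Real.sin (L/d)
      + Real.sin (L/d) / (L/d)) - L with had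
  set bb : ℕ → ℝ := fun d => (d : ℝ) * Real.log (Real.sin (L/d) / (L/d)) with hbd
  have hdfact : ∀ d : ℕ, 2 ≤ d → 0 < L / d ∧ L / d ≤ 1/2 := by
    intro d hd
    have hdp : (0:ℝ) < d := by positivity
    have hd2 : (2:ℝ) ≤ d := by exact_mod_cast hd
    exact ⟨by positivity, by rw [div_le_iff₀ hdp]; nlinarith⟩
  have KA : Tendsto (fun d : ℕ => (d : ℝ) * aa d + L^2/6) atTop (𝓝 0) := by
    apply squeeze_zero_norm' (a := fun d : ℕ => 100 * L^3 / d)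
    · filter_upwards [eventually_ge_atTop 2] with d hd
      obtain ⟨ht, ht2⟩ := hdfact d hd
      have hdp : (0:ℝ) < d := by positivity
      have hb := logF_est ht ht2
      have he : (d:ℝ) * aa d + L^2/6 = (d:ℝ)^2 *
          (Real.log (1 - Real.cos (L/d) + Real.sin (L/d) + Real.sin (L/d) / (L/d))
            - L/d + (L/d)^2/6) := by
        simp only [had]; field_simp
      rw [Real.norm_eq_abs, he, abs_mul, abs_of_nonneg (by positivity : (0:ℝ) ≤ (d:ℝ)^2)]
      calc (d:ℝ)^2 * |Real.log (1 - Real.cos (L/d) + Real.sin (L/d) + Real.sin (L/d) / (L/d))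
            - L/d + (L/d)^2/6| ≤ (d:ℝ)^2 * (100 * (L/d)^3) :=
            mul_le_mul_of_nonneg_left hb (by positivity)
        _ = 100 * L^3 / d := by field_simp
    · exact tendsto_const_div_atTop_nhds_zero_nat (100 * L^3)
  have KB : Tendsto (fun d : ℕ => (d : ℝ) * bb d + L^2/6) atTop (𝓝 0) := by
    apply squeeze_zero_norm' (a := fun d : ℕ => 100 * L^3 / d)
    · filter_upwards [eventually_ge_atTop 2] with d hd
      obtain ⟨ht, ht2⟩ := hdfact d hd
      have hdp : (0:ℝ) < d := by positivity
      have hb := logG_est ht ht2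
      have he : (d:ℝ) * bb d + L^2/6 = (d:ℝ)^2 *
          (Real.log (Real.sin (L/d) / (L/d)) + (L/d)^2/6) := by
        simp only [hbd]; field_simp
      rw [Real.norm_eq_abs, he, abs_mul, abs_of_nonneg (by positivity : (0:ℝ) ≤ (d:ℝ)^2)]
      calc (d:ℝ)^2 * |Real.log (Real.sin (L/d) / (L/d)) + (L/d)^2/6|
            ≤ (d:ℝ)^2 * (100 * (L/d)^3) :=
            mul_le_mul_of_nonneg_left hb (by positivity)
        _ = 100 * L^3 / d := by field_simp
    · exact tendsto_const_div_atTop_nhds_zero_nat (100 * L^3)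
  have K1 : Tendsto (fun d : ℕ => (d:ℝ) * aa d) atTop (𝓝 (-(L^2/6))) := by
    rw [← tendsto_sub_nhds_zero_iff]
    exact KA.congr fun d => by ring
  have K2 : Tendsto (fun d : ℕ => (d:ℝ) * bb d) atTop (𝓝 (-(L^2/6))) := by
    rw [← tendsto_sub_nhds_zero_iff]
    exact KB.congr fun d => by ring
  have ha0 : Tendsto aa atTop (𝓝 0) := by
    have h := K1.div_atTop tendsto_natCast_atTop_atTop
    apply h.congr'
    filter_upwards [eventually_ge_atTop 1] with d hd
    have hdp : (0:ℝ) < d := by positivity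
    field_simp
  have hb0 : Tendsto bb atTop (𝓝 0) := by
    have h := K2.div_atTop tendsto_natCast_atTop_atTop
    apply h.congr'
    filter_upwards [eventually_ge_atTop 1] with d hd
    have hdp : (0:ℝ) < d := by positivity
    field_simp
  -- d * (exp (x d) - 1) → -(L²/6) for x = aa, bb
  have key : ∀ (x : ℕ → ℝ), Tendsto x atTop (𝓝 0) →
      Tendsto (fun d : ℕ => (d:ℝ) * x d) atTop (𝓝 (-(L^2/6))) →
      Tendsto (fun d : ℕ => (d:ℝ) * (Real.exp (x d) - 1)) atTop (𝓝 (-(L^2/6))) := by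
    intro x hx0 hx
    have hsmall : Tendsto (fun d : ℕ => (d:ℝ) * (Real.exp (x d) - 1 - x d)) atTop (𝓝 0) := by
      apply squeeze_zero_norm' (a := fun d : ℕ => |(d:ℝ) * x d| * |x d|)
      · have hev : ∀ᶠ d : ℕ in atTop, x d ∈ Icc (-1:ℝ) 1 :=
          hx0.eventually (Icc_mem_nhds (by norm_num) (by norm_num))
        filter_upwards [hev] with d hd
        have h1 : |x d| ≤ 1 := abs_le.2 ⟨hd.1, hd.2⟩
        have h2 := Real.abs_exp_sub_one_sub_id_le h1
        rw [Real.norm_eq_abs, abs_mul, abs_mul]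
        calc |(d:ℝ)| * |Real.exp (x d) - 1 - x d| ≤ |(d:ℝ)| * (x d)^2 :=
              mul_le_mul_of_nonneg_left h2 (abs_nonneg _)
          _ = |(d:ℝ)| * |x d| * |x d| := by rw [mul_assoc, abs_mul_abs_self, sq]
      · have := (hx.abs).mul (hx0.abs)
        simpa using this
    have h := hx.add hsmall
    rw [add_zero] at h
    exact h.congr fun d => by ring
  have E1 := key aa ha0 K1
  have E2 := key bb hb0 K2
  have Ffin := (E1.const_mul (-(1+c))).add E2
  have hval : -(1+c) * (-(L^2/6)) + -(L^2/6) = c / 6 * L^2 := by ring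
  rw [← hval]
  apply Ffin.congr'
  filter_upwards [eventually_ge_atTop 2] with d hd
  obtain ⟨ht, ht2⟩ := hdfact d hd
  have hdp : (0:ℝ) < d := by positivity
  have hπ : π * (L / (π * d)) = L / d := by
    rw [eq_div_iff (ne_of_gt hdp)]
    field_simp
  have hFp := Fn_pos ht (by linarith)
  have hGp := G_pos ht (by linarith)
  have h1 : (d:ℝ) * Real.log (1 - Real.cos (L/d) + Real.sin (L/d) + Real.sin (L/d) / (L/d))
      = L + aa d := by simp only [had]; ring
  have h2 : (d:ℝ) * Real.log (Real.sin (L/d) / (L/d)) = bb d := by simp only [hbd]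
  have hFd : (1 - Real.cos (L/d) + Real.sin (L/d) + Real.sin (L/d) / (L/d)) ^ d
      = (1+c) * Real.exp (aa d) := by
    rw [← Real.exp_log hFp, ← Real.exp_nat_mul, h1, Real.exp_add, hexp]
  have hGd : (Real.sin (L/d) / (L/d)) ^ d = Real.exp (bb d) := by
    rw [← Real.exp_log hGp, ← Real.exp_nat_mul, h2]
  have hD : D d (L / (π * d)) = (1+c) * Real.exp (aa d) - Real.exp (bb d) := by
    simp only [D, hπ]
    rw [hFd, hGd]
  rw [hD]
  ring


theorem stmt_17 (A B : ℝ) (hA : 0 < A) (hAB : A ≤ B) :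
    Tendsto (fun d : ℕ => (d : ℝ) * (A / B - D d (Real.log (1 + A / B) / (π * d))))
      atTop (nhds (A / (6 * B) * (Real.log (1 + A / B)) ^ 2)) := by
  have hB : 0 < B := lt_of_lt_of_le hA hAB
  have hc : 0 < A / B := div_pos hA hB
  have hc1 : A / B ≤ 1 := (div_le_one hB).2 hAB
  have h := aux (A / B) hc hc1
  have hval : A / (6 * B) * (Real.log (1 + A / B)) ^ 2
      = (A / B) / 6 * (Real.log (1 + A / B)) ^ 2 := by
    rw [div_div, mul_comm B 6]
  rw [hval]
  exact h
end

section
/- Let 0 < A ≤ B and ω_d = (1/(πd))·ln(1 + A/B). Then lim_{d→∞} (1/d)·D_d'(ω_d) = π(1 + A/B), where D_d(x) = (1 - cos(πx) + sin(πx) + sinc(πx))^d - (sinc(πx))^d. -/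
open Real Set Filter Topology

-- general pow limit lemma
lemma aux_pow_lim {a : ℕ → ℝ} {c : ℝ}
    (h : Tendsto (fun d : ℕ => (d : ℝ) * (a d - 1)) atTop (𝓝 c)) :
    Tendsto (fun d : ℕ => a d ^ (d - 1)) atTop (𝓝 (Real.exp c)) := by
  have h1 : Tendsto a atTop (𝓝 1) := by
    have h0 : Tendsto (fun d : ℕ => (1 / (d:ℝ)) * ((d:ℝ) * (a d - 1))) atTop (𝓝 (0 * c)) :=
      tendsto_one_div_atTop_nhds_zero_nat.mul h
    rw [zero_mul] at h0
    have : Tendsto (fun d : ℕ => a d - 1) atTop (𝓝 0) := by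
      refine h0.congr' ?_
      filter_upwards [eventually_ge_atTop 1] with d hd
      have : (d:ℝ) ≠ 0 := Nat.cast_ne_zero.2 (by omega)
      field_simp
    have := this.add_const 1
    simpa using this
  have hpos : ∀ᶠ d in atTop, (1:ℝ)/2 < a d := h1.eventually_const_lt (by norm_num)
  -- squeeze for d * log (a d)
  have hlog : Tendsto (fun d : ℕ => (d:ℝ) * Real.log (a d)) atTop (𝓝 c) := by
    have hlow : Tendsto (fun d : ℕ => ((d:ℝ) * (a d - 1)) / a d) atTop (𝓝 c) := by
      simpa [Pi.div_def] using h.div h1 one_ne_zero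
    refine tendsto_of_tendsto_of_tendsto_of_le_of_le' hlow h ?_ ?_
    · filter_upwards [hpos] with d hd
      have ha : 0 < a d := by linarith
      have : Real.log (a d)⁻¹ ≤ (a d)⁻¹ - 1 := Real.log_le_sub_one_of_pos (by positivity)
      rw [Real.log_inv] at this
      have hle : 1 - (a d)⁻¹ ≤ Real.log (a d) := by linarith
      have h2 : (a d - 1) / a d = 1 - (a d)⁻¹ := by field_simp
      rw [mul_div_assoc, h2]
      exact mul_le_mul_of_nonneg_left hle (Nat.cast_nonneg d)
    · filter_upwards [hpos] with d hd
      exact mul_le_mul_of_nonneg_left (Real.log_le_sub_one_of_pos (by linarith)) (Nat.cast_nonneg d)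
  have hlog0 : Tendsto (fun d : ℕ => Real.log (a d)) atTop (𝓝 0) := by
    have := (Real.continuousAt_log one_ne_zero).tendsto.comp h1
    simpa [Function.comp_def] using this
  have hfin : Tendsto (fun d : ℕ => ((d - 1 : ℕ) : ℝ) * Real.log (a d)) atTop (𝓝 c) := by
    have := hlog.sub hlog0
    rw [sub_zero] at this
    refine this.congr' ?_
    filter_upwards [eventually_ge_atTop 1] with d hd
    rw [Nat.cast_sub hd]
    push_cast
    ring
  have := (Real.continuous_exp.tendsto c).comp hfin
  refine this.congr' ?_
  filter_upwards [hpos] with d hd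
  have ha : 0 < a d := by linarith
  simp only [Function.comp]
  rw [Real.exp_nat_mul, Real.exp_log ha]


section
variable {c : ℝ} (hc : 0 < c)
include hc

lemma aux_u_tendsto : Tendsto (fun d : ℕ => c / (d:ℝ)) atTop (𝓝 0) :=
  tendsto_const_div_atTop_nhds_zero_nat c

-- (b) d * sin (c/d) → c
lemma aux_sin_lim : Tendsto (fun d : ℕ => (d:ℝ) * Real.sin (c / d)) atTop (𝓝 c) := by
  have hslope : Tendsto (slope Real.sin 0) (𝓝[≠] 0) (𝓝 1) := by
    have := Real.hasDerivAt_sin 0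
    rw [Real.cos_zero] at this
    exact hasDerivAt_iff_tendsto_slope.1 this
  have hu : Tendsto (fun d : ℕ => c / (d:ℝ)) atTop (𝓝[≠] 0) := by
    rw [tendsto_nhdsWithin_iff]
    refine ⟨aux_u_tendsto hc, ?_⟩
    filter_upwards [eventually_ge_atTop 1] with d hd
    have hd' : (0:ℝ) < d := by exact_mod_cast hd
    simp only [Set.mem_compl_iff, Set.mem_singleton_iff]
    exact (div_pos hc hd').ne'
  have := (hslope.comp hu).const_mul c
  rw [mul_one] at this
  refine this.congr' ?_
  filter_upwards [eventually_ge_atTop 1] with d hd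
  have hd' : (0:ℝ) < d := by exact_mod_cast hd
  have hcd : c / (d:ℝ) ≠ 0 := by positivity
  simp only [Function.comp, slope_def_field, div_sub_div_same]
  rw [Real.sin_zero]
  field_simp
  rw [sub_zero, mul_zero, sub_zero, mul_div_cancel_left₀ _ hc.ne']

-- (a) d * (1 - cos (c/d)) → 0
lemma aux_cos_lim : Tendsto (fun d : ℕ => (d:ℝ) * (1 - Real.cos (c / d))) atTop (𝓝 0) := by
  refine squeeze_zero' ?_ ?_ (tendsto_const_div_atTop_nhds_zero_nat (c^2/2))
  · filter_upwards [eventually_ge_atTop 1] with d hd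
    have := Real.cos_le_one (c / d)
    have hd' : (0:ℝ) ≤ d := Nat.cast_nonneg d
    nlinarith
  · filter_upwards [eventually_ge_atTop 1] with d hd
    have hd' : (0:ℝ) < d := by exact_mod_cast hd
    have h1 : 1 - Real.cos (c/d) ≤ (c/d)^2/2 := by
      have := Real.one_sub_sq_div_two_le_cos (x := c/d)
      linarith
    have h2 : (d:ℝ) * ((c/d)^2/2) = c^2/2/d := by field_simp
    nlinarith

-- (c) d * (sin(c/d)/(c/d) - 1) → 0
lemma aux_sinc_lim : Tendsto (fun d : ℕ => (d:ℝ) * (Real.sin (c / d) / (c / d) - 1)) atTop (𝓝 0) := by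
  rw [← neg_zero]
  have key : Tendsto (fun d : ℕ => (d:ℝ) * (1 - Real.sin (c / d) / (c / d))) atTop (𝓝 0) := by
    refine squeeze_zero' ?_ ?_ (tendsto_const_div_atTop_nhds_zero_nat (c^2/4))
    · filter_upwards [eventually_ge_atTop 1] with d hd
      have hd' : (0:ℝ) < d := by exact_mod_cast hd
      have hu : 0 < c / d := by positivity
      have := Real.sin_le hu.le
      have h1 : Real.sin (c/d) / (c/d) ≤ 1 := by
        rw [div_le_one hu]; exact this
      nlinarith
    · filter_upwards [eventually_ge_atTop 1,
        (aux_u_tendsto hc).eventually_lt_const one_pos] with d hd hu1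
      have hd' : (0:ℝ) < d := by exact_mod_cast hd
      have hu : 0 < c / d := by positivity
      have hs := Real.sin_gt_sub_cube hu
      have h1 : 1 - Real.sin (c/d) / (c/d) ≤ (c/d)^2/4 := by
        rw [sub_le_iff_le_add, ← sub_le_iff_le_add']
        rw [le_div_iff₀ hu] at *
        nlinarith
      have h2 : (d:ℝ) * ((c/d)^2/4) = c^2/4/d := by field_simp
      nlinarith
  have := key.neg
  refine this.congr fun d => by ring

end


noncomputable def Q (u : ℝ) : ℝ := (Real.cos u * u - Real.sin u) / u ^ 2

lemma aux_hasDerivAt_D (d : ℕ) {x : ℝ} (hx : x ≠ 0) :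
    HasDerivAt (D d)
      ((d:ℝ) * (1 - Real.cos (π*x) + Real.sin (π*x) + Real.sin (π*x)/(π*x)) ^ (d-1)
          * (π * Real.sin (π*x) + π * Real.cos (π*x) + π * Q (π*x))
        - (d:ℝ) * (Real.sin (π*x)/(π*x)) ^ (d-1) * (π * Q (π*x))) x := by
  have hπx : π * x ≠ 0 := mul_ne_zero Real.pi_ne_zero hx
  have hlin : HasDerivAt (fun y : ℝ => π * y) π x := by
    simpa using (hasDerivAt_id x).const_mul π
  have hsin : HasDerivAt (fun y => Real.sin (π*y)) (Real.cos (π*x) * π) x :=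
    (Real.hasDerivAt_sin (π*x)).comp x hlin
  have hcos : HasDerivAt (fun y => Real.cos (π*y)) (-Real.sin (π*x) * π) x :=
    (Real.hasDerivAt_cos (π*x)).comp x hlin
  have hg : HasDerivAt (fun y => Real.sin (π*y)/(π*y)) (π * Q (π*x)) x := by
    have : HasDerivAt (fun y => Real.sin (π*y)/(π*y)) _ x := hsin.div hlin hπx
    convert this using 1
    rw [Q]
    field_simp
  have hf : HasDerivAt (fun y => 1 - Real.cos (π*y) + Real.sin (π*y) + Real.sin (π*y)/(π*y))
      (π * Real.sin (π*x) + π * Real.cos (π*x) + π * Q (π*x)) x := by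
    have : HasDerivAt (fun y => 1 - Real.cos (π*y) + Real.sin (π*y) + Real.sin (π*y)/(π*y)) _ x :=
      (((hasDerivAt_const x (1:ℝ)).sub hcos).add hsin).add hg
    convert this using 1
    ring
  have := (hf.pow d).sub (hg.pow d)
  exact this

-- T4 : Q (c/d) → 0
lemma aux_Q_lim {c : ℝ} (hc : 0 < c) :
    Tendsto (fun d : ℕ => Q (c / (d:ℝ))) atTop (𝓝 0) := by
  refine squeeze_zero_norm' ?_ (tendsto_const_div_atTop_nhds_zero_nat c)
  filter_upwards [eventually_ge_atTop 1,
    (tendsto_const_div_atTop_nhds_zero_nat c).eventually_lt_const one_pos] with d hd hu1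
  have hd' : (0:ℝ) < d := by exact_mod_cast hd
  set u := c / (d:ℝ) with hu_def
  have hu : 0 < u := by positivity
  have h1 : 1 - Real.cos u ≤ u^2/2 := by
    have := Real.one_sub_sq_div_two_le_cos (x := u); linarith
  have h2 : u - Real.sin u ≤ u^3/4 := by
    have := Real.sin_gt_sub_cube hu; linarith [pow_pos hu 3]
  have h3 : Real.sin u ≤ u := Real.sin_le hu.le
  have h4 : Real.cos u ≤ 1 := Real.cos_le_one u
  have hnum : |Real.cos u * u - Real.sin u| ≤ u^3 := by
    rw [abs_le]
    constructor
    · nlinarith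
    · nlinarith
  have : |Q u| ≤ u := by
    rw [Q, abs_div, abs_of_nonneg (by positivity : (0:ℝ) ≤ u^2), div_le_iff₀ (by positivity)]
    nlinarith
  calc ‖Q u‖ ≤ u := this
    _ = c / d := rfl


theorem stmt_18 (A B : ℝ) (hA : 0 < A) (hAB : A ≤ B) :
    Tendsto (fun d : ℕ => (1 / (d : ℝ)) * deriv (D d) (Real.log (1 + A / B) / (π * d)))
      atTop (nhds (π * (1 + A / B))) := by
  set c := Real.log (1 + A / B) with hc_def
  have hAB0 : 0 < 1 + A / B := by
    have := div_pos hA (lt_of_lt_of_le hA hAB)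
    linarith
  have h1lt : 1 < 1 + A / B := by
    have : 0 < A / B := div_pos hA (lt_of_lt_of_le hA hAB)
    linarith
  have hc : 0 < c := Real.log_pos h1lt
  have hsin := aux_sin_lim hc
  have hcosl := aux_cos_lim hc
  have hsincl := aux_sinc_lim hc
  have hQ := aux_Q_lim hc
  have hu := aux_u_tendsto hc
  have hT1 : Tendsto (fun d : ℕ =>
      (1 - Real.cos (c/d) + Real.sin (c/d) + Real.sin (c/d)/(c/d)) ^ (d-1)) atTop
      (𝓝 (1 + A/B)) := by
    have hsum : Tendsto (fun d : ℕ => (d:ℝ) *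
        ((1 - Real.cos (c/d) + Real.sin (c/d) + Real.sin (c/d)/(c/d)) - 1)) atTop (𝓝 c) := by
      have h := (hcosl.add hsin).add hsincl
      rw [zero_add, add_zero] at h
      refine h.congr fun d => by ring
    have h := aux_pow_lim hsum
    rwa [hc_def, Real.exp_log hAB0] at h
  have hT3 : Tendsto (fun d : ℕ => (Real.sin (c/d)/(c/d)) ^ (d-1)) atTop (𝓝 1) := by
    have h := aux_pow_lim hsincl
    rwa [Real.exp_zero] at h
  have hsinu : Tendsto (fun d : ℕ => Real.sin (c/d)) atTop (𝓝 0) := by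
    have h := (Real.continuous_sin.tendsto 0).comp hu
    simpa [Function.comp_def] using h
  have hcosu : Tendsto (fun d : ℕ => Real.cos (c/d)) atTop (𝓝 1) := by
    have h := (Real.continuous_cos.tendsto 0).comp hu
    simpa [Function.comp_def] using h
  have hT2 : Tendsto (fun d : ℕ =>
      π * Real.sin (c/d) + π * Real.cos (c/d) + π * Q (c/d)) atTop (𝓝 π) := by
    have h := ((hsinu.const_mul π).add (hcosu.const_mul π)).add (hQ.const_mul π)
    simpa using h
  have hfinal := (hT1.mul hT2).sub (hT3.mul (hQ.const_mul π))
  have heq : (1 + A/B) * π - 1 * (π * 0) = π * (1 + A/B) := by ring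
  rw [heq] at hfinal
  refine hfinal.congr' ?_
  filter_upwards [eventually_ge_atTop 1] with d hd
  have hd' : (0:ℝ) < d := by exact_mod_cast hd
  have hx : c / (π * d) ≠ 0 := (div_pos hc (by positivity)).ne'
  have hπx : π * (c / (π * d)) = c / d := by
    field_simp
  have hder := (aux_hasDerivAt_D d hx).deriv
  rw [hπx] at hder
  rw [hder]
  field_simp
end
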